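/- Let (a,b) ∈ Λ₃ and x ∈ (a - 1/b, 1 - 2/b + a). Define f(x) = 3x² - (2 - 7/b + 7a)x - (1 + 1/b - 2a)(1 - 2/b + a). Then f(x) > 0. -/

import Mathlib

theorem stmt16 (a b : ℝ) (hab : (1/2 ≤ a ∧ a ≤ 4/5 ∧ 4/(2+3*a) < b ∧ b ≤ 6/(2+5*a) ∧ 1 < b))
    (x : ℝ) (hx : x ∈ Set.Ioo (a - 1/b) (1 - 2/b + a)) :
    0 < 3*x^2 - (2 - 7/b + 7*a)*x - (1 + 1/b - 2*a)*(1 - 2/b + a) := by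
  obtain ⟨ha1, ha2, hb1, hb2, hb3⟩ := hab
  obtain ⟨hx1, hx2⟩ := hx
  have hb0 : (0:ℝ) < b := by linarith
  have hbne : b ≠ 0 := ne_of_gt hb0
  have hinv : b * (1/b) = 1 := by field_simp
  have hd2 : (0:ℝ) < 2 + 5*a := by linarith
  have h2 : b * (2 + 5*a) ≤ 6 := by
    rw [le_div_iff₀ hd2] at hb2; linarith
  have hc : b/2 ≤ a*b := by nlinarith
  have h5 : 0 < 5 + a*b - 4*b := by linarith
  have he : 0 ≤ 2 - b - a*b := by linarith
  have hc0 : 0 ≤ a*b := by nlinarith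
  have hx2' : b * x < b - 2 + a*b := by
    have h := mul_pos hb0 (sub_pos.mpr hx2)
    have h' : b*(1 - 2/b + a - x) = b - 2 + a*b - b*x := by field_simp
    rw [h'] at h; linarith
  have t1 : 0 < ((b - 2 + a*b) - b*x) * (5 + a*b - 4*b) :=
    mul_pos (by linarith) h5
  have t2 : 0 ≤ (a*b) * (2 - b - a*b) := mul_nonneg hc0 he
  have t3 : 0 ≤ (b*x - (b - 2 + a*b))^2 := sq_nonneg _
  have hP : 0 < 3*(b*x)^2 - (2*b - 7 + 7*(a*b))*(b*x)
      - (b + 1 - 2*(a*b))*(b - 2 + a*b) := by nlinarith [t1, t2, t3]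
  have hEq : 3*x^2 - (2 - 7/b + 7*a)*x - (1 + 1/b - 2*a)*(1 - 2/b + a)
      = (3*(b*x)^2 - (2*b - 7 + 7*(a*b))*(b*x)
        - (b + 1 - 2*(a*b))*(b - 2 + a*b)) / b^2 := by
    field_simp
  rw [hEq]
  exact div_pos hP (by positivity)
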